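/- Let X be a completely metrizable topological space without isolated points, T : X → X continuous and topologically transitive, and A a countable subset of X. Then there exists a dense G_δ subset D of X such that every z ∈ D is recurrent and the closure of A is contained in L(z) for every z ∈ D. -/

import Mathlib

open Filter Topology Set Metric

/-- The limit set `L(x)`: limits of subsequences `T^[kₙ] x` along a strictly
increasing sequence of positive integers. -/
def limitSet {X : Type*} [TopologicalSpace X] (T : X → X) (x : X) : Set X :=
  {y | ∃ k : ℕ → ℕ, StrictMono k ∧ (∀ n, 0 < k n) ∧
    Tendsto (fun n => T^[k n] x) atTop (𝓝 y)}

/-- The extended (prolongational) limit set `J(x)`. -/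
def extLimitSet {X : Type*} [TopologicalSpace X] (T : X → X) (x : X) : Set X :=
  {y | ∃ k : ℕ → ℕ, StrictMono k ∧ (∀ n, 0 < k n) ∧
    ∃ u : ℕ → X, Tendsto u atTop (𝓝 x) ∧
      Tendsto (fun n => T^[k n] (u n)) atTop (𝓝 y)}

/-- Topological transitivity. -/
def TopTransitive {X : Type*} [TopologicalSpace X] (T : X → X) : Prop :=
  ∀ U V : Set X, IsOpen U → IsOpen V → U.Nonempty → V.Nonempty →
    ∃ n : ℕ, (T^[n] '' U ∩ V).Nonempty

-- helper: strictly increasing positive selection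
lemma exists_strictMono_aux {P : ℕ → ℕ → Prop} (h : ∀ m N, ∃ n, N ≤ n ∧ P m n) :
    ∃ k : ℕ → ℕ, StrictMono k ∧ (∀ n, 0 < k n) ∧ ∀ m, P m (k m) := by
  choose f hf hP using h
  let k : ℕ → ℕ := fun m => Nat.rec (f 0 1) (fun m prev => f (m + 1) (prev + 1)) m
  have hlt : ∀ m, k m < k (m + 1) := fun m => Nat.lt_of_succ_le (hf (m + 1) (k m + 1))
  have hpos : ∀ n, 0 < k n := by
    intro n
    induction n with
    | zero => exact lt_of_lt_of_le Nat.one_pos (hf 0 1)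
    | succ n ih => exact lt_trans ih (hlt n)
  refine ⟨k, strictMono_nat_of_lt_succ hlt, hpos, ?_⟩
  intro m
  cases m with
  | zero => exact hP 0 1
  | succ m => exact hP (m + 1) (k m + 1)

-- helper: two disjoint open nonempty subsets of an open set
lemma two_disjoint_opens {X : Type*} [MetricSpace X]
    (hiso : ∀ x : X, (𝓝[≠] x).NeBot) {V : Set X} (hV : IsOpen V) (hne : V.Nonempty) :
    ∃ B₁ B₂ : Set X, IsOpen B₁ ∧ IsOpen B₂ ∧ B₁.Nonempty ∧ B₂.Nonempty ∧
      B₁ ⊆ V ∧ B₂ ⊆ V ∧ Disjoint B₁ B₂ := by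
  obtain ⟨x, hx⟩ := hne
  obtain ⟨r, hr, hball⟩ := Metric.isOpen_iff.1 hV x hx
  have hmem : Metric.ball x (r / 2) ∩ {x}ᶜ ∈ 𝓝[≠] x :=
    Filter.inter_mem (nhdsWithin_le_nhds (Metric.ball_mem_nhds x (by linarith)))
      self_mem_nhdsWithin
  obtain ⟨y, hy1, hy2⟩ := (hiso x).nonempty_of_mem hmem
  have hyx : y ≠ x := hy2
  have hd : 0 < dist y x := dist_pos.2 hyx
  set d := dist y x with hdef
  have hdr : d < r / 2 := Metric.mem_ball.1 hy1
  refine ⟨Metric.ball x (min (d / 2) r), Metric.ball y (d / 2), Metric.isOpen_ball,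
    Metric.isOpen_ball, ⟨x, Metric.mem_ball_self (by positivity)⟩,
    ⟨y, Metric.mem_ball_self (by positivity)⟩, ?_, ?_, ?_⟩
  · exact subset_trans (Metric.ball_subset_ball (min_le_right _ _)) hball
  · intro w hw
    apply hball
    have : dist w x ≤ dist w y + dist y x := dist_triangle w y x
    have hwy : dist w y < d / 2 := Metric.mem_ball.1 hw
    exact Metric.mem_ball.2 (by linarith)
  · rw [Set.disjoint_left]
    intro w hw1 hw2
    have h1 : dist w x < d / 2 := lt_of_lt_of_le (Metric.mem_ball.1 hw1) (min_le_left _ _)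
    have h2 : dist w y < d / 2 := Metric.mem_ball.1 hw2
    have : d ≤ dist y w + dist w x := dist_triangle y w x
    rw [dist_comm] at h2
    linarith

-- chain lemma
lemma chain_lemma {X : Type*} [MetricSpace X]
    (hiso : ∀ x : X, (𝓝[≠] x).NeBot) {T : X → X} (hT : Continuous T)
    (htrans : TopTransitive T) :
    ∀ N : ℕ, ∀ V : Set X, IsOpen V → V.Nonempty →
      ∃ W : Set X, IsOpen W ∧ W.Nonempty ∧ W ⊆ V ∧
        ∃ M, N ≤ M ∧ ∀ z ∈ W, T^[M] z ∈ V := by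
  intro N
  induction N with
  | zero =>
    intro V hV hne
    exact ⟨V, hV, hne, subset_rfl, 0, le_refl 0, fun z hz => hz⟩
  | succ N ih =>
    intro V hV hne
    obtain ⟨W, hW, hWne, hWV, M, hM, hMW⟩ := ih V hV hne
    obtain ⟨B₁, B₂, hB₁, hB₂, hB₁ne, hB₂ne, hB₁W, hB₂W, hdisj⟩ :=
      two_disjoint_opens hiso hW hWne
    obtain ⟨n, w, ⟨u, hu, huw⟩, hwB₂⟩ := htrans B₁ B₂ hB₁ hB₂ hB₁ne hB₂ne
    have hn : 1 ≤ n := by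
      rcases Nat.eq_zero_or_pos n with h0 | h1
      · exfalso
        subst h0
        simp only [Function.iterate_zero, id] at huw
        exact Set.disjoint_left.1 hdisj (huw ▸ hu) hwB₂
      · exact h1
    refine ⟨B₁ ∩ T^[n] ⁻¹' B₂, hB₁.inter ((hT.iterate n).isOpen_preimage B₂ hB₂),
      ⟨u, hu, by simpa [Set.mem_preimage, huw] using hwB₂⟩,
      subset_trans (Set.inter_subset_left) (subset_trans hB₁W hWV), M + n, by omega, ?_⟩
    intro z hz
    rw [Function.iterate_add_apply]
    exact hMW _ (hB₂W hz.2)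

-- transitivity with arbitrarily large times
lemma trans_large {X : Type*} [MetricSpace X]
    (hiso : ∀ x : X, (𝓝[≠] x).NeBot) {T : X → X} (hT : Continuous T)
    (htrans : TopTransitive T) (U V : Set X) (hU : IsOpen U) (hV : IsOpen V)
    (hUne : U.Nonempty) (hVne : V.Nonempty) (N : ℕ) :
    ∃ n, N ≤ n ∧ ∃ z ∈ U, T^[n] z ∈ V := by
  obtain ⟨W, hW, hWne, hWV, M, hM, hMW⟩ := chain_lemma hiso hT htrans N V hV hVne
  obtain ⟨p, w, ⟨u, hu, huw⟩, hwW⟩ := htrans U W hU hW hUne hWne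
  refine ⟨M + p, le_trans hM (Nat.le_add_right M p), u, hu, ?_⟩
  rw [Function.iterate_add_apply, huw]
  exact hMW w hwW

lemma tendsto_of_dist_lt {X : Type*} [MetricSpace X] {f : ℕ → X} {y : X} {c : ℝ}
    (h : ∀ m, dist (f m) y < c / (m + 1)) : Tendsto f atTop (𝓝 y) := by
  rw [tendsto_iff_dist_tendsto_zero]
  have hc : Tendsto (fun m : ℕ => c / ((m : ℝ) + 1)) atTop (𝓝 0) := by
    have := tendsto_one_div_add_atTop_nhds_zero_nat.const_mul c
    simpa [mul_one_div, div_eq_mul_inv] using this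
  exact squeeze_zero (fun n => dist_nonneg) (fun n => le_of_lt (h n)) hc

theorem stmt5 {X : Type*} [MetricSpace X] [CompleteSpace X]
    (hiso : ∀ x : X, (𝓝[≠] x).NeBot)
    (T : X → X) (hT : Continuous T) (htrans : TopTransitive T)
    (A : Set X) (hA : A.Countable) :
    ∃ D : Set X, Dense D ∧ IsGδ D ∧
      ∀ z ∈ D, z ∈ limitSet T z ∧ closure A ⊆ limitSet T z := by
  classical
  haveI := hA.to_subtype
  set R : ℕ × ℕ → Set X := fun p =>
    ⋃ (n : ℕ) (_ : p.2 ≤ n), {z | dist (T^[n] z) z < 1 / (p.1 + 1)} with hRdef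
  set O : ↑A × ℕ × ℕ → Set X := fun q =>
    ⋃ (n : ℕ) (_ : q.2.2 ≤ n), {z | dist (T^[n] z) (q.1 : X) < 1 / (q.2.1 + 1)} with hOdef
  have hRopen : ∀ p, IsOpen (R p) := by
    intro p
    refine isOpen_iUnion fun n => isOpen_iUnion fun _ => ?_
    exact isOpen_lt (Continuous.dist (hT.iterate n) continuous_id) continuous_const
  have hOopen : ∀ q, IsOpen (O q) := by
    intro q
    refine isOpen_iUnion fun n => isOpen_iUnion fun _ => ?_
    exact isOpen_lt (Continuous.dist (hT.iterate n) continuous_const) continuous_const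
  have hRdense : ∀ p, Dense (R p) := by
    intro ⟨m, N⟩
    rw [dense_iff_inter_open]
    intro U hU hUne
    obtain ⟨x, hx⟩ := hUne
    obtain ⟨r, hr, hball⟩ := Metric.isOpen_iff.1 hU x hx
    set s : ℝ := min r (1 / (2 * (m + 1))) with hs
    have hspos : 0 < s := lt_min hr (by positivity)
    have hsub : Metric.ball x s ⊆ U := subset_trans (Metric.ball_subset_ball (min_le_left _ _)) hball
    obtain ⟨n, hn, z, hz, hzn⟩ := trans_large hiso hT htrans (Metric.ball x s) (Metric.ball x s)
      Metric.isOpen_ball Metric.isOpen_ball ⟨x, Metric.mem_ball_self hspos⟩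
      ⟨x, Metric.mem_ball_self hspos⟩ N
    refine ⟨z, hsub hz, ?_⟩
    simp only [hRdef, Set.mem_iUnion]
    refine ⟨n, hn, ?_⟩
    have h1 : dist (T^[n] z) x < s := Metric.mem_ball.1 hzn
    have h2 : dist z x < s := Metric.mem_ball.1 hz
    have h3 : dist (T^[n] z) z ≤ dist (T^[n] z) x + dist x z := dist_triangle _ _ _
    have h4 : s ≤ 1 / (2 * (m + 1)) := min_le_right _ _
    have h5 : (0:ℝ) < (m:ℝ) + 1 := by positivity
    have : 1 / (2 * ((m:ℝ) + 1)) + 1 / (2 * ((m:ℝ) + 1)) = 1 / ((m:ℝ) + 1) := by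
      field_simp
      norm_num
    rw [dist_comm x z] at h3
    show dist (T^[n] z) z < 1 / ((m:ℝ) + 1)
    linarith
  have hOdense : ∀ q, Dense (O q) := by
    intro ⟨⟨a, ha⟩, m, N⟩
    rw [dense_iff_inter_open]
    intro U hU hUne
    obtain ⟨n, hn, z, hz, hzn⟩ := trans_large hiso hT htrans U (Metric.ball a (1 / (m + 1)))
      hU Metric.isOpen_ball hUne ⟨a, Metric.mem_ball_self (by positivity)⟩ N
    refine ⟨z, hz, ?_⟩
    simp only [hOdef, Set.mem_iUnion]
    exact ⟨n, hn, Metric.mem_ball.1 hzn⟩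
  have hGδ1 : IsGδ (⋂ p, R p) := IsGδ.iInter fun p => (hRopen p).isGδ
  have hGδ2 : IsGδ (⋂ q, O q) := IsGδ.iInter fun q => (hOopen q).isGδ
  have hD1 : Dense (⋂ p, R p) := dense_iInter_of_isOpen hRopen hRdense
  have hD2 : Dense (⋂ q, O q) := dense_iInter_of_isOpen hOopen hOdense
  refine ⟨(⋂ p, R p) ∩ ⋂ q, O q, hD1.inter_of_Gδ hGδ1 hGδ2 hD2, hGδ1.inter hGδ2, ?_⟩
  intro z hz
  have hrec : ∀ m N : ℕ, ∃ n, N ≤ n ∧ dist (T^[n] z) z < 1 / ((m:ℝ) + 1) := by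
    intro m N
    have := Set.mem_iInter.1 hz.1 (m, N)
    simp only [hRdef, Set.mem_iUnion] at this
    obtain ⟨n, hn, hlt⟩ := this
    exact ⟨n, hn, hlt⟩
  have hhit : ∀ (a : X), a ∈ A → ∀ m N : ℕ, ∃ n, N ≤ n ∧
      dist (T^[n] z) a < 1 / ((m:ℝ) + 1) := by
    intro a ha m N
    have := Set.mem_iInter.1 hz.2 (⟨a, ha⟩, m, N)
    simp only [hOdef, Set.mem_iUnion] at this
    obtain ⟨n, hn, hlt⟩ := this
    exact ⟨n, hn, hlt⟩
  constructor
  · obtain ⟨k, hk1, hk2, hk3⟩ := exists_strictMono_aux hrec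
    exact ⟨k, hk1, hk2, tendsto_of_dist_lt hk3⟩
  · intro y hy
    have key : ∀ m N : ℕ, ∃ n, N ≤ n ∧ dist (T^[n] z) y < 2 / ((m:ℝ) + 1) := by
      intro m N
      obtain ⟨a, ha, hay⟩ := Metric.mem_closure_iff.1 hy (1 / ((m:ℝ) + 1)) (by positivity)
      obtain ⟨n, hn, hlt⟩ := hhit a ha m N
      refine ⟨n, hn, ?_⟩
      have h3 : dist (T^[n] z) y ≤ dist (T^[n] z) a + dist a y := dist_triangle _ _ _
      rw [dist_comm a y] at h3
      have : 1 / ((m:ℝ) + 1) + 1 / ((m:ℝ) + 1) = 2 / ((m:ℝ) + 1) := by ring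
      linarith
    obtain ⟨k, hk1, hk2, hk3⟩ := exists_strictMono_aux key
    exact ⟨k, hk1, hk2, tendsto_of_dist_lt hk3⟩
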